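/- arXiv:2307.05850 — 7 statements merged into one kernel-verified Lean document; each statement's English description precedes it below -/
import Mathlib

section
/- Let k ≥ 2, s ≥ 1, and let p_X, p_Y : ℕ → ℝ with p_Y(n) = p_X(n+s) for all n ≥ 1 and p_X(n) ≥ 1 for all n. If lim_{n→∞} ((k−1)/k^{n+1}) log p_X(n) = h, then lim_{n→∞} ((k−1)/k^{n+1}) log p_Y(n) = k^s · h. In particular if h > 0 the two limits differ, so the entropy h_PS is not a conjugacy invariant. -/
theorem stmt_8 {k s : ℕ} (hk : 2 ≤ k) (hs : 1 ≤ s) (pX pY : ℕ → ℝ)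
    (hconj : ∀ n, 1 ≤ n → pY n = pX (n + s)) (hpX : ∀ n, 1 ≤ pX n) (h : ℝ)
    (hX : Filter.Tendsto
      (fun n => ((k : ℝ) - 1) / (k : ℝ) ^ (n + 1) * Real.log (pX n))
      Filter.atTop (nhds h)) :
    Filter.Tendsto
      (fun n => ((k : ℝ) - 1) / (k : ℝ) ^ (n + 1) * Real.log (pY n))
      Filter.atTop (nhds ((k : ℝ) ^ s * h)) := by
  have hk0 : (0 : ℝ) < (k : ℝ) := by positivity
  have hshift : Filter.Tendsto
      (fun n => (k : ℝ) ^ s * (((k : ℝ) - 1) / (k : ℝ) ^ (n + s + 1) * Real.log (pX (n + s))))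
      Filter.atTop (nhds ((k : ℝ) ^ s * h)) := by
    exact (hX.comp (Filter.tendsto_add_atTop_nat s)).const_mul _
  refine hshift.congr' ?_
  filter_upwards [Filter.eventually_ge_atTop 1] with n hn
  rw [hconj n hn]
  have hkne : (k : ℝ) ≠ 0 := ne_of_gt hk0
  field_simp
  ring_nf
end

section
/- For the binary tree-shift X₂ defined by matrices A = [[1,1],[1,1]] and B = [[1,0],[0,1]], the complexity function satisfies p(n) = 2^(2^n − 1) · 2 = 2^(2^n) for all n ≥ 1; equivalently ‖f^n(𝟙)‖₁ = 2^{2^{n−1}} · 2^{2^{n−2}} ⋯ 2 · 2. Consequently h_PS(X₂) = lim_n (log p(n))/(2^{n+1} − 1) = (1/2) log 2. -/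
theorem stmt_12 :
    let A : Matrix (Fin 2) (Fin 2) ℝ := !![1, 1; 1, 1]
    let B : Matrix (Fin 2) (Fin 2) ℝ := !![1, 0; 0, 1]
    let f : (Fin 2 → ℝ) → (Fin 2 → ℝ) := fun x i => A.mulVec x i * B.mulVec x i
    let p : ℕ → ℝ := fun n => (f^[n] (fun _ => 1)) 0 + (f^[n] (fun _ => 1)) 1
    (∀ n : ℕ, 1 ≤ n → p n = 2 ^ (2 ^ n)) ∧
    Filter.Tendsto (fun n : ℕ => Real.log (p n) / ((2 : ℝ) ^ (n + 1) - 1))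
      Filter.atTop (nhds ((1 / 2) * Real.log 2)) := by
  intro A B f p
  have key : ∀ n : ℕ, f^[n] (fun _ => 1) = fun _ => (2:ℝ) ^ (2 ^ n - 1) := by
    intro n
    induction n with
    | zero => funext i; simp [f]
    | succ n ih =>
      rw [Function.iterate_succ_apply', ih]
      funext i
      have h1 : (1:ℕ) ≤ 2 ^ n := Nat.one_le_two_pow
      have hexp : 2 ^ n * 2 - 1 = 1 + ((2 ^ n - 1) + (2 ^ n - 1)) := by omega
      fin_cases i <;>
        simp [f, A, B, Matrix.mulVec, dotProduct, Fin.sum_univ_two, hexp,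
          pow_add] <;> ring
  have hp : ∀ n : ℕ, p n = 2 ^ (2 ^ n) := by
    intro n
    have h1 : (1:ℕ) ≤ 2 ^ n := Nat.one_le_two_pow
    simp only [p, key n]
    have h2 : (2:ℝ) ^ (2 ^ n - 1) + 2 ^ (2 ^ n - 1) = 2 ^ (2 ^ n - 1 + 1) := by
      rw [pow_succ]; ring
    rw [h2]; congr 1; omega
  constructor
  · intro n _; exact hp n
  · have heq : ∀ n : ℕ, Real.log (p n) / ((2 : ℝ) ^ (n + 1) - 1)
        = Real.log 2 / (2 - (1/2 : ℝ) ^ n) := by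
      intro n
      rw [hp n, Real.log_pow]
      have h2 : (2:ℝ) ^ n ≠ 0 := by positivity
      have hd : ((2:ℝ) ^ (n+1) - 1) = (2:ℝ) ^ n * (2 - (1/2 : ℝ) ^ n) := by
        rw [mul_sub, ← mul_pow]; norm_num [pow_succ]
      rw [hd]
      push_cast
      have hpos : (0:ℝ) < 2 - (1/2 : ℝ) ^ n := by
        have : (1/2:ℝ) ^ n ≤ 1 := pow_le_one₀ (by norm_num) (by norm_num)
        linarith
      field_simp
    simp only [heq]
    have hlim : Filter.Tendsto (fun n : ℕ => (2 : ℝ) - (1/2 : ℝ) ^ n)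
        Filter.atTop (nhds 2) := by
      have := tendsto_pow_atTop_nhds_zero_of_lt_one (by norm_num : (0:ℝ) ≤ 1/2)
        (by norm_num : (1/2:ℝ) < 1)
      simpa using (tendsto_const_nhds.sub this)
    have hh : (1/2:ℝ) * Real.log 2 = Real.log 2 / 2 := by ring
    rw [hh]
    exact tendsto_const_nhds.div hlim (by norm_num)
end

section
/- For the binary tree-shift X₄ = (A,D) with A = [[1,1],[1,1]] and D = [[1,1],[1,0]], setting f(x) = (Ax)*(Dx), one has for all n ≥ 3: ‖f^n(𝟙)‖₁ = Fib(3)^{2^{n−1}} · Fib(4)^{2^{n−2}} ⋯ Fib(n)^{4} · Fib(n+1)^2 · Fib(n+2) · Fib(n+3), where Fib is the Fibonacci sequence with Fib(1)=Fib(2)=1. -/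
private def myf : (Fin 2 → ℕ) → (Fin 2 → ℕ) :=
  fun x i => (!![1, 1; 1, 1] : Matrix (Fin 2) (Fin 2) ℕ).mulVec x i *
    (!![1, 1; 1, 0] : Matrix (Fin 2) (Fin 2) ℕ).mulVec x i

private def Q (n : ℕ) : ℕ := ∏ l ∈ Finset.Icc 2 n, Nat.fib (l + 1) ^ (2 ^ (n - l + 1))

private lemma myf_apply (x : Fin 2 → ℕ) :
    myf x 0 = (x 0 + x 1) * (x 0 + x 1) ∧ myf x 1 = (x 0 + x 1) * x 0 := by
  constructor <;>
  simp [myf, Matrix.mulVec, dotProduct, Fin.sum_univ_two]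

private lemma Qsucc (n : ℕ) (hn : 2 ≤ n) :
    Q (n + 1) = Q n ^ 2 * Nat.fib (n + 2) ^ 2 := by
  rw [Q, Finset.prod_Icc_succ_top (by omega)]
  have h1 : n + 1 - (n + 1) + 1 = 1 := by omega
  rw [h1]
  congr 1
  rw [Q, ← Finset.prod_pow]
  apply Finset.prod_congr rfl
  intro l hl
  have hl' : l ≤ n := (Finset.mem_Icc.mp hl).2
  have : n + 1 - l + 1 = (n - l + 1) + 1 := by omega
  rw [this, pow_succ, pow_mul]

private lemma key : ∀ n, 2 ≤ n →
    myf^[n] (fun _ => 1) 0 = Q n * Nat.fib (n + 2) ^ 2 ∧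
    myf^[n] (fun _ => 1) 1 = Q n * Nat.fib (n + 2) * Nat.fib (n + 1) := by
  intro n hn
  induction n, hn using Nat.le_induction with
  | base =>
    constructor <;> · show (myf (myf (fun _ => 1))) _ = _; decide
  | succ n hn ih =>
    obtain ⟨h0, h1⟩ := ih
    rw [Function.iterate_succ_apply']
    obtain ⟨g0, g1⟩ := myf_apply (myf^[n] (fun _ => 1))
    rw [g0, g1, h0, h1, Qsucc n hn]
    have hf : Nat.fib (n + 3) = Nat.fib (n + 1) + Nat.fib (n + 2) := Nat.fib_add_two
    constructor
    · rw [show n + 1 + 2 = n + 3 from rfl, hf]; ring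
    · rw [show n + 1 + 2 = n + 3 from rfl, hf]; ring

theorem stmt_13 :
    let A : Matrix (Fin 2) (Fin 2) ℕ := !![1, 1; 1, 1]
    let D : Matrix (Fin 2) (Fin 2) ℕ := !![1, 1; 1, 0]
    let f : (Fin 2 → ℕ) → (Fin 2 → ℕ) := fun x i => A.mulVec x i * D.mulVec x i
    ∀ n : ℕ, 3 ≤ n →
      (f^[n] (fun _ => 1)) 0 + (f^[n] (fun _ => 1)) 1 =
        (∏ l ∈ Finset.Icc 2 n, Nat.fib (l + 1) ^ (2 ^ (n - l + 1))) *
          Nat.fib (n + 2) * Nat.fib (n + 3) := by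
  intro A D f n hn
  have hfeq : f = myf := rfl
  obtain ⟨h0, h1⟩ := key n (by omega)
  rw [hfeq, h0, h1, ← Q]
  have hf : Nat.fib (n + 3) = Nat.fib (n + 1) + Nat.fib (n + 2) := Nat.fib_add_two
  rw [hf]; ring
end

section
/- The series ∑_{n=2}^∞ (1/2^n) · log Fib(n+1) converges, and its value h satisfies 0.476 ≤ h ≤ 0.585. In particular, ∑_{n=2}^{5} (1/2^n) log Fib(n+1) ≤ h ≤ ∑_{n=2}^{5} (1/2^n) log Fib(n+1) + (log 2)/4 · ∑_{n=4}^∞ n/2^n, using Fib(n+1) ≤ 2^{n−2} for n ≥ 6. -/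
open Real

private lemma fib_le_two_pow : ∀ m : ℕ, Nat.fib (m + 1) ≤ 2 ^ m ∧ Nat.fib (m + 2) ≤ 2 ^ (m + 1) := by
  intro m
  induction m with
  | zero => constructor <;> norm_num
  | succ n ih =>
    refine ⟨ih.2, ?_⟩
    rw [show n + 1 + 2 = (n + 1) + 2 from rfl, Nat.fib_add_two]
    calc Nat.fib (n + 1) + Nat.fib (n + 2) ≤ 2 ^ n + 2 ^ (n + 1) :=
          Nat.add_le_add ih.1 ih.2
      _ ≤ 2 ^ (n + 1 + 1) := by ring_nf; omega

private lemma fib_le_aux : ∀ m : ℕ, Nat.fib (m + 7) ≤ 2 ^ (m + 4) ∧ Nat.fib (m + 8) ≤ 2 ^ (m + 5) := by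
  intro m
  induction m with
  | zero => constructor <;> norm_num
  | succ n ih =>
    refine ⟨ih.2, ?_⟩
    rw [show n + 1 + 8 = (n + 7) + 2 by omega, Nat.fib_add_two]
    calc Nat.fib (n + 7) + Nat.fib (n + 7 + 1) ≤ 2 ^ (n + 4) + 2 ^ (n + 5) :=
          Nat.add_le_add ih.1 ih.2
      _ ≤ 2 ^ (n + 1 + 5) := by ring_nf; omega

private lemma log3_lb : (84 / 53 : ℝ) * Real.log 2 ≤ Real.log 3 := by
  have h : ((2:ℝ) ^ 84) ≤ 3 ^ 53 := by norm_num
  have := Real.log_le_log (by positivity) h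
  rw [Real.log_pow, Real.log_pow] at this
  push_cast at this
  linarith

private lemma log3_ub : Real.log 3 ≤ (65 / 41 : ℝ) * Real.log 2 := by
  have h : ((3:ℝ) ^ 41) ≤ 2 ^ 65 := by norm_num
  have := Real.log_le_log (by positivity) h
  rw [Real.log_pow, Real.log_pow] at this
  push_cast at this
  linarith

private lemma log5_lb : (65 / 28 : ℝ) * Real.log 2 ≤ Real.log 5 := by
  have h : ((2:ℝ) ^ 65) ≤ 5 ^ 28 := by norm_num
  have := Real.log_le_log (by positivity) h
  rw [Real.log_pow, Real.log_pow] at this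
  push_cast at this
  linarith

private lemma log5_ub : Real.log 5 ≤ (93 / 40 : ℝ) * Real.log 2 := by
  have h : ((5:ℝ) ^ 40) ≤ 2 ^ 93 := by norm_num
  have := Real.log_le_log (by positivity) h
  rw [Real.log_pow, Real.log_pow] at this
  push_cast at this
  linarith

private lemma f_summable : Summable (fun n : ℕ => (n : ℝ) * (1/2) ^ n) := by
  have := summable_pow_mul_geometric_of_norm_lt_one (R := ℝ) (r := 1/2) 1 (by norm_num)
  simpa using this

private lemma f_tsum : ∑' n : ℕ, (n : ℝ) * (1/2) ^ n = 2 := by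
  have := tsum_coe_mul_geometric_of_norm_lt_one (𝕜 := ℝ) (r := 1/2) (by norm_num)
  rw [this]; norm_num

private noncomputable def F : ℕ → ℝ := fun n => (1 / 2 ^ (n + 2)) * Real.log (Nat.fib (n + 3))

private lemma F_nonneg : ∀ n, 0 ≤ F n := by
  intro n
  apply mul_nonneg (by positivity)
  apply Real.log_nonneg
  exact_mod_cast Nat.fib_pos.mpr (by omega)

private lemma F_le : ∀ n : ℕ, F n ≤ Real.log 2 * (((n:ℝ) + 2) * (1/2) ^ (n + 2)) := by
  intro n
  have hfib : (Nat.fib (n + 3) : ℝ) ≤ 2 ^ (n + 2) := by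
    exact_mod_cast (fib_le_two_pow (n + 2)).1
  have hpos : (0:ℝ) < Nat.fib (n + 3) := by
    exact_mod_cast Nat.fib_pos.mpr (by omega)
  have h1 : Real.log (Nat.fib (n + 3)) ≤ ((n:ℝ) + 2) * Real.log 2 := by
    have := Real.log_le_log hpos hfib
    rw [Real.log_pow] at this
    push_cast at this
    linarith
  have h2 : (0:ℝ) ≤ 1 / 2 ^ (n + 2) := by positivity
  calc F n ≤ (1 / 2 ^ (n + 2)) * (((n:ℝ) + 2) * Real.log 2) :=
        mul_le_mul_of_nonneg_left h1 h2
    _ = Real.log 2 * (((n:ℝ) + 2) * (1/2) ^ (n + 2)) := by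
        rw [div_pow, one_pow]; ring

private lemma F_summable : Summable F := by
  apply Summable.of_nonneg_of_le F_nonneg F_le
  apply Summable.mul_left
  have : Summable (fun n : ℕ => ((n + 2 : ℕ) : ℝ) * (1/2) ^ (n + 2)) :=
    (summable_nat_add_iff 2).2 f_summable
  apply this.congr
  intro n; push_cast; ring

private lemma F_tail_le : ∀ n : ℕ, F (n + 4) ≤ (Real.log 2 / 4) * (((n:ℝ) + 4) / 2 ^ (n + 4)) := by
  intro n
  have hfib : (Nat.fib (n + 4 + 3) : ℝ) ≤ 2 ^ (n + 4) := by
    have := (fib_le_aux n).1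
    have h2 : Nat.fib (n + 4 + 3) = Nat.fib (n + 7) := rfl
    rw [h2]; exact_mod_cast this
  have hpos : (0:ℝ) < Nat.fib (n + 4 + 3) := by
    exact_mod_cast Nat.fib_pos.mpr (by omega)
  have h1 : Real.log (Nat.fib (n + 4 + 3)) ≤ ((n:ℝ) + 4) * Real.log 2 := by
    have := Real.log_le_log hpos hfib
    rw [Real.log_pow] at this
    push_cast at this
    linarith
  have h2 : (0:ℝ) ≤ 1 / 2 ^ (n + 4 + 2) := by positivity
  calc F (n + 4) ≤ (1 / 2 ^ (n + 4 + 2)) * (((n:ℝ) + 4) * Real.log 2) :=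
        mul_le_mul_of_nonneg_left h1 h2
    _ = (Real.log 2 / 4) * (((n:ℝ) + 4) / 2 ^ (n + 4)) := by
        rw [show n + 4 + 2 = (n + 4) + 2 from rfl, pow_add]; ring

set_option maxHeartbeats 1000000 in
theorem stmt_14 :
    let g : ℕ → ℝ := fun n => (1 / 2 ^ (n + 2)) * Real.log (Nat.fib (n + 3))
    -- g m is the term of index n = m + 2 of ∑_{n=2}^∞ (1/2^n) log Fib(n+1)
    let h : ℝ := ∑' n : ℕ, g n
    let L : ℝ := ∑ n ∈ Finset.Icc 2 5, (1 / 2 ^ n) * Real.log (Nat.fib (n + 1))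
    Summable g ∧
    (0.476 ≤ h ∧ h ≤ 0.585) ∧
    (L ≤ h ∧
      h ≤ L + (Real.log 2 / 4) * ∑' n : ℕ, ((n : ℝ) + 4) / 2 ^ (n + 4)) := by
  intro g h L
  have hgF : g = F := rfl
  have hh : h = ∑' n : ℕ, F n := by rw [show h = ∑' n : ℕ, g n from rfl, hgF]
  -- the tail tsum value
  have htail_sum : Summable (fun n : ℕ => ((n : ℝ) + 4) / 2 ^ (n + 4)) := by
    have : Summable (fun n : ℕ => ((n + 4 : ℕ) : ℝ) * (1/2) ^ (n + 4)) :=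
      (summable_nat_add_iff 4).2 f_summable
    apply this.congr
    intro n
    push_cast
    rw [div_pow, one_pow]
    ring
  have htail : ∑' n : ℕ, ((n : ℝ) + 4) / 2 ^ (n + 4) = 5 / 8 := by
    have key := Summable.sum_add_tsum_nat_add (f := fun n : ℕ => (n : ℝ) * (1/2) ^ n) 4 f_summable
    rw [f_tsum] at key
    have hr : ∑ i ∈ Finset.range 4, (i : ℝ) * (1/2) ^ i = 11 / 8 := by
      rw [Finset.sum_range_succ, Finset.sum_range_succ, Finset.sum_range_succ,
        Finset.sum_range_succ]
      norm_num
    rw [hr] at key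
    have he : ∑' n : ℕ, ((n : ℝ) + 4) / 2 ^ (n + 4)
        = ∑' n : ℕ, ((n + 4 : ℕ) : ℝ) * (1/2) ^ (n + 4) := by
      congr 1; funext n; push_cast; rw [div_pow, one_pow]; ring
    rw [he]
    push_cast at key ⊢
    linarith
  -- L equals sum of first four terms of F
  have hL : L = ∑ i ∈ Finset.range 4, F i := by
    rw [show L = ∑ n ∈ Finset.Icc 2 5, (1 / 2 ^ n : ℝ) * Real.log (Nat.fib (n + 1)) from rfl]
    rw [show Finset.Icc 2 5 = ({2, 3, 4, 5} : Finset ℕ) by decide]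
    rw [Finset.sum_insert (by decide), Finset.sum_insert (by decide),
        Finset.sum_insert (by decide), Finset.sum_singleton,
        Finset.sum_range_succ, Finset.sum_range_succ, Finset.sum_range_succ,
        Finset.sum_range_succ, Finset.sum_range_zero]
    simp only [F]
    norm_num
    ring
  -- h = L + tail of F
  have hsplit : L + ∑' n : ℕ, F (n + 4) = h := by
    rw [hL, hh]; exact Summable.sum_add_tsum_nat_add 4 F_summable
  have htail_nonneg : 0 ≤ ∑' n : ℕ, F (n + 4) :=
    tsum_nonneg (fun n => F_nonneg _)
  have hLh : L ≤ h := by linarith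
  have hrhs_sum : Summable (fun n : ℕ => (Real.log 2 / 4) * (((n:ℝ) + 4) / 2 ^ (n + 4))) :=
    htail_sum.mul_left _
  have hFtail_sum : Summable (fun n : ℕ => F (n + 4)) := (summable_nat_add_iff 4).2 F_summable
  have htail_le : ∑' n : ℕ, F (n + 4) ≤ (Real.log 2 / 4) * ∑' n : ℕ, ((n : ℝ) + 4) / 2 ^ (n + 4) := by
    rw [← tsum_mul_left]
    exact Summable.tsum_le_tsum F_tail_le hFtail_sum hrhs_sum
  have hub : h ≤ L + (Real.log 2 / 4) * ∑' n : ℕ, ((n : ℝ) + 4) / 2 ^ (n + 4) := by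
    linarith
  -- explicit value of L
  have hLval : L = (11/32) * Real.log 2 + (1/8) * Real.log 3 + (1/16) * Real.log 5 := by
    rw [hL, Finset.sum_range_succ, Finset.sum_range_succ, Finset.sum_range_succ,
        Finset.sum_range_succ, Finset.sum_range_zero]
    simp only [F]
    rw [show Nat.fib (0 + 3) = 2 from rfl, show Nat.fib (1 + 3) = 3 from rfl,
        show Nat.fib (2 + 3) = 5 from rfl, show Nat.fib (3 + 3) = 8 from rfl]
    rw [show ((8:ℕ):ℝ) = 2 ^ 3 by norm_num, Real.log_pow]
    push_cast
    ring
  have hl2a := Real.log_two_gt_d9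
  have hl2b := Real.log_two_lt_d9
  have h3a := log3_lb
  have h3b := log3_ub
  have h5a := log5_lb
  have h5b := log5_ub
  refine ⟨hgF ▸ F_summable, ⟨?_, ?_⟩, hLh, hub⟩
  · have : (0.476 : ℝ) ≤ L := by rw [hLval]; nlinarith
    linarith
  · have : L + (Real.log 2 / 4) * (5/8 : ℝ) ≤ 0.585 := by rw [hLval]; nlinarith
    rw [htail] at hub
    linarith
end

section
/- Define c₁ = 2 and c_{j} = c_{j−1}(c_{j−1} + 1) for j > 1 (sequence 2, 6, 42, 1806, …). Then for the binary tree-shift (B,E) with B = [[1,0],[0,1]] and E = [[1,0],[1,1]] and f(x) = (Bx)*(Ex), one has f^n(𝟙) = (1, c_n) for all n ≥ 1, hence ‖f^n(𝟙)‖₁ = c_n + 1. -/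
theorem stmt_16 (c : ℕ → ℕ) (hc1 : c 1 = 2)
    (hc : ∀ j, 2 ≤ j → c j = c (j - 1) * (c (j - 1) + 1)) :
    let B : Matrix (Fin 2) (Fin 2) ℕ := !![1, 0; 0, 1]
    let E : Matrix (Fin 2) (Fin 2) ℕ := !![1, 0; 1, 1]
    let f : (Fin 2 → ℕ) → (Fin 2 → ℕ) := fun x i => B.mulVec x i * E.mulVec x i
    ∀ n : ℕ, 1 ≤ n →
      f^[n] (fun _ => 1) = ![1, c n] ∧
      (f^[n] (fun _ => 1)) 0 + (f^[n] (fun _ => 1)) 1 = c n + 1 := by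
  intro B E f n hn
  have key : ∀ n : ℕ, 1 ≤ n → f^[n] (fun _ => 1) = ![1, c n] := by
    intro n hn
    induction n with
    | zero => omega
    | succ m ih =>
      rcases Nat.eq_or_lt_of_le hn with h | h
      · simp only [← h]
        simp only [Function.iterate_one]
        funext i
        fin_cases i <;>
          simp [f, B, E, Matrix.mulVec, dotProduct, Fin.sum_univ_two, hc1]
      · have hm : 1 ≤ m := by omega
        rw [Function.iterate_succ_apply', ih hm]
        have hcm : c (m + 1) = c m * (c m + 1) := by
          have := hc (m + 1) (by omega)
          simpa using this
        funext i
        fin_cases i <;>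
          simp [f, B, E, Matrix.mulVec, dotProduct, Fin.sum_univ_two, hcm, add_comm]
  refine ⟨key n hn, ?_⟩
  rw [key n hn]
  simp [add_comm]
end

section
/- Define e₀ = 1, e₁ = 2, and e_j = e_{j−2}² (e_{j−2}² + e_{j−1}) for j ≥ 2. Then e_n + e_{n−1}² > 2^{2^{n−1}} for all n ≥ 1. Consequently, lim inf_{n→∞} (log(e_n + e_{n−1}²))/2^{n+1} ≥ (1/4) log 2. -/
open Filter

theorem stmt_18 (e : ℕ → ℕ) (he0 : e 0 = 1) (he1 : e 1 = 2)
    (he : ∀ j, 2 ≤ j → e j = e (j - 2) ^ 2 * (e (j - 2) ^ 2 + e (j - 1))) :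
    (∀ n : ℕ, 1 ≤ n → 2 ^ 2 ^ (n - 1) < e n + e (n - 1) ^ 2) ∧
    (1 / 4) * Real.log 2 ≤
      Filter.liminf
        (fun n : ℕ => Real.log ((e n : ℝ) + (e (n - 1) : ℝ) ^ 2) / 2 ^ (n + 1))
        Filter.atTop := by
  have hpos : ∀ n, 1 ≤ e n := by
    intro n
    induction n using Nat.strong_induction_on with
    | _ n ih =>
      match n with
      | 0 => omega
      | 1 => omega
      | (m+2) =>
        rw [he (m+2) (by omega)]
        have h1 := ih m (by omega)
        have h2 := ih (m+1) (by omega)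
        simp only [Nat.add_sub_cancel, show m+2-1 = m+1 from rfl]
        nlinarith
  have he2 : e 2 = 3 := by rw [he 2 (by norm_num)]; norm_num [he0, he1]
  have he3 : e 3 = 28 := by rw [he 3 (by norm_num)]; norm_num [he1, he2]
  -- upper bound: e n ≤ 2^(2^n - 1)
  have hub : ∀ n, e n ≤ 2 ^ (2 ^ n - 1) := by
    intro n
    induction n using Nat.strong_induction_on with
    | _ n ih =>
      match n with
      | 0 => simp [he0]
      | 1 => simp [he1]
      | (m+2) =>
        rw [he (m+2) (by omega)]
        simp only [Nat.add_sub_cancel, show m+2-1 = m+1 from rfl]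
        have h1 := ih m (by omega)
        have h2 := ih (m+1) (by omega)
        have hk : 1 ≤ 2 ^ m := Nat.one_le_two_pow
        set k := 2 ^ m with hkdef
        have hk1 : 2 ^ (m+1) = 2*k := by rw [pow_succ]; ring
        have hk2 : 2 ^ (m+2) = 4*k := by rw [pow_succ, pow_succ]; ring
        have hsq : e m ^ 2 ≤ 2 ^ (2*k - 2) := by
          calc e m ^ 2 ≤ (2^(k-1))^2 := Nat.pow_le_pow_left h1 2
          _ = 2 ^ (2*k-2) := by rw [← pow_mul]; congr 1; omega
        have hsum : e m ^ 2 + e (m+1) ≤ 2 ^ (2*k) := by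
          have : 2 ^ (2*k-2) + 2 ^ (2*k-1) ≤ 2 ^ (2*k) := by
            have e1 : 2 ^ (2*k-1) = 2 ^ (2*k-2) * 2 := by
              rw [← pow_succ]; congr 1; omega
            have e2 : 2 ^ (2*k) = 2 ^ (2*k-2) * 4 := by
              rw [show (4:ℕ) = 2^2 from rfl, ← pow_add]; congr 1; omega
            omega
          have := h2
          rw [hk1] at this
          omega
        calc e m ^2 * (e m ^2 + e (m+1)) ≤ 2^(2*k-2) * 2^(2*k) :=
              Nat.mul_le_mul hsq hsum
        _ = 2 ^ (2*k-2 + 2*k) := by rw [← pow_add]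
        _ ≤ 2 ^ (2^(m+2) - 1) := by
            apply Nat.pow_le_pow_right (by norm_num); omega
  -- strengthened main inequality
  have key : ∀ n, 3 ≤ n → 2 ^ (2 ^ (n-1) + 1) ≤ e n + e (n-1) ^ 2 := by
    intro n hn
    induction n, hn using Nat.le_induction with
    | base => norm_num [he3, he2]
    | succ n hn ih =>
      have h1 : e (n+1) = e (n-1)^2 * (e (n-1)^2 + e n) := by
        have := he (n+1) (by omega)
        simpa [show n+1-2 = n-1 by omega, show n+1-1 = n from rfl] using this
      simp only [Nat.add_sub_cancel]
      set x := e n with hx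
      set y := e (n-1) with hy
      have hid : (x + y^2)^2 = (e (n+1) + x^2) + x * y^2 := by rw [h1]; ring
      have hamgm : 4 * (x * y^2) ≤ (x + y^2)^2 := by
        zify; nlinarith [sq_nonneg ((x:ℤ) - (y:ℤ)^2)]
      have hS : 2 ^ (2^n + 2) ≤ (x + y^2)^2 := by
        calc (2:ℕ) ^ (2^n + 2) = (2 ^ (2^(n-1)+1))^2 := by
              rw [← pow_mul]; congr 1
              have h2n : 2^(n-1) * 2 = 2^n := by
                rw [← pow_succ]; congr 1; omega
              omega
        _ ≤ (x + y^2)^2 := Nat.pow_le_pow_left ih 2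
      have hT : 2 ^ (2^n + 2) = 2 * 2 ^ (2^n + 1) := by
        rw [← pow_succ']
      have hfin : 4 * (e (n+1) + x^2) ≥ 3 * (x + y^2)^2 := by
        have : 4 * (x + y^2)^2 = 4 * (e (n+1) + x^2) + 4 * (x * y^2) := by
          rw [hid]; ring
        omega
      have : 3 * (2 * 2 ^ (2^n + 1)) ≤ 4 * (e (n+1) + x^2) := by
        calc 3 * (2 * 2 ^ (2^n+1)) = 3 * 2 ^ (2^n+2) := by rw [hT]
        _ ≤ 3 * (x+y^2)^2 := Nat.mul_le_mul_left 3 hS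
        _ ≤ 4 * (e (n+1) + x^2) := hfin
      omega
  have part1 : ∀ n : ℕ, 1 ≤ n → 2 ^ 2 ^ (n - 1) < e n + e (n - 1) ^ 2 := by
    intro n hn
    match n, hn with
    | 1, _ => simp [he1, he0]
    | 2, _ => simp [he2, he1]
    | (m+3), _ =>
      have := key (m+3) (by omega)
      have hlt : (2:ℕ) ^ 2 ^ (m+3-1) < 2 ^ (2 ^ (m+3-1) + 1) :=
        Nat.pow_lt_pow_right (by norm_num) (by omega)
      omega
  refine ⟨part1, ?_⟩
  -- liminf part
  set u : ℕ → ℝ := fun n => Real.log ((e n : ℝ) + (e (n-1) : ℝ)^2) / 2 ^ (n+1) with hu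
  have hposR : ∀ n : ℕ, (2:ℝ) ≤ (e n : ℝ) + (e (n-1) : ℝ)^2 := by
    intro n
    have h1 := hpos n
    have h2 := hpos (n-1)
    have : (1:ℝ) ≤ (e n : ℝ) := by exact_mod_cast h1
    have : (1:ℝ) ≤ (e (n-1) : ℝ) := by exact_mod_cast h2
    nlinarith
  have habove : ∀ n : ℕ, (e n : ℝ) + (e (n-1) : ℝ)^2 ≤ 2 ^ 2 ^ n := by
    intro n
    have hN : e n + e (n-1) ^ 2 ≤ 2 ^ 2 ^ n := by
      match n with
      | 0 => simp [he0]
      | (m+1) =>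
        have h1 := hub (m+1)
        have h2 := hub m
        simp only [Nat.add_sub_cancel] at *
        have hk : 1 ≤ 2 ^ m := Nat.one_le_two_pow
        set k := 2^m with hkdef
        have hk1 : 2 ^ (m+1) = 2*k := by rw [pow_succ]; ring
        have hsq : e m ^ 2 ≤ 2 ^ (2*k - 2) := by
          calc e m ^ 2 ≤ (2^(k-1))^2 := Nat.pow_le_pow_left h2 2
          _ = 2 ^ (2*k-2) := by rw [← pow_mul]; congr 1; omega
        rw [hk1] at h1 ⊢
        have e1 : 2 ^ (2*k-1) = 2 ^ (2*k-2) * 2 := by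
          rw [← pow_succ]; congr 1; omega
        have e2 : 2 ^ (2*k) = 2 ^ (2*k-2) * 4 := by
          rw [show (4:ℕ) = 2^2 from rfl, ← pow_add]; congr 1; omega
        omega
    calc (e n : ℝ) + (e (n-1) : ℝ)^2 = ((e n + e (n-1)^2 : ℕ) : ℝ) := by push_cast; ring
    _ ≤ ((2 ^ 2 ^ n : ℕ) : ℝ) := by exact_mod_cast hN
    _ = 2 ^ 2 ^ n := by push_cast; ring
  have hlow : ∀ n : ℕ, (1/4) * Real.log 2 ≤ u n := by
    intro n
    have hpow : (0:ℝ) < 2 ^ (n+1) := by positivity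
    rw [hu]
    simp only
    rw [le_div_iff₀ hpow]
    match n with
    | 0 =>
      have : (e 0 : ℝ) + (e (0-1) : ℝ)^2 = 2 := by norm_num [he0]
      rw [this]
      have : (0:ℝ) ≤ Real.log 2 := Real.log_nonneg (by norm_num)
      nlinarith
    | (m+1) =>
      have hge : (2:ℝ) ^ 2 ^ m ≤ (e (m+1) : ℝ) + (e (m+1-1) : ℝ)^2 := by
        have := part1 (m+1) (by omega)
        simp only [Nat.add_sub_cancel] at this ⊢
        have : (2^2^m : ℕ) ≤ e (m+1) + e m ^ 2 := le_of_lt this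
        calc (2:ℝ) ^ 2^m = ((2^2^m : ℕ) : ℝ) := by push_cast; ring
        _ ≤ ((e (m+1) + e m ^2 : ℕ) : ℝ) := by exact_mod_cast this
        _ = (e (m+1) : ℝ) + (e m : ℝ)^2 := by push_cast; ring
      have hlog : ((2:ℝ)^m) * Real.log 2 ≤ Real.log ((e (m+1) : ℝ) + (e (m+1-1) : ℝ)^2) := by
        have h1 : Real.log ((2:ℝ) ^ 2^m) ≤ Real.log ((e (m+1) : ℝ) + (e (m+1-1) : ℝ)^2) :=
          Real.log_le_log (by positivity) hge
        rw [Real.log_pow] at h1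
        push_cast at h1
        exact h1
      have hpows : (2:ℝ)^(m+1+1) = 4 * ((2:ℝ)^m) := by
        rw [pow_succ, pow_succ]; ring
      rw [hpows]
      linarith
  have hup : ∀ n : ℕ, u n ≤ Real.log 2 := by
    intro n
    have hpow : (0:ℝ) < 2 ^ (n+1) := by positivity
    rw [hu]
    simp only
    rw [div_le_iff₀ hpow]
    have h1 : Real.log ((e n : ℝ) + (e (n-1) : ℝ)^2) ≤ Real.log ((2:ℝ) ^ 2^n) :=
      Real.log_le_log (by linarith [hposR n]) (habove n)
    rw [Real.log_pow] at h1
    push_cast at h1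
    have hlog2 : (0:ℝ) ≤ Real.log 2 := Real.log_nonneg (by norm_num)
    have h2 : ((2:ℝ)^n) * Real.log 2 ≤ Real.log 2 * 2^(n+1) := by
      have : ((2:ℝ)^n) ≤ 2^(n+1) := pow_le_pow_right₀ (by norm_num) (by omega)
      nlinarith
    linarith
  refine Filter.le_liminf_of_le ?_ (Filter.Eventually.of_forall hlow)
  exact Filter.isBoundedUnder_of ⟨Real.log 2, hup⟩ |>.isCoboundedUnder_ge
end

section
/- Define s₁ = 4 and s_n = (s_{n−1} + 1)² for n > 1 (sequence 4, 25, 676, 458329, …). Then for the binary tree-shift (G,G) with G = [[1,1],[0,1]] and f(x) = (Gx)*(Gx), one has f^n(𝟙) = (s_n, 1) for all n ≥ 1, hence the complexity function is p(n) = s_n + 1. -/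
theorem stmt_19 (s : ℕ → ℕ) (hs1 : s 1 = 4)
    (hs : ∀ n, 2 ≤ n → s n = (s (n - 1) + 1) ^ 2) :
    let G : Matrix (Fin 2) (Fin 2) ℕ := !![1, 1; 0, 1]
    let f : (Fin 2 → ℕ) → (Fin 2 → ℕ) := fun x i => G.mulVec x i * G.mulVec x i
    ∀ n : ℕ, 1 ≤ n →
      f^[n] (fun _ => 1) = ![s n, 1] ∧
      (f^[n] (fun _ => 1)) 0 + (f^[n] (fun _ => 1)) 1 = s n + 1 := by
  intro G f
  have hstep : ∀ a : ℕ, f ![a, 1] = ![(a + 1) ^ 2, 1] := by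
    intro a
    funext i
    fin_cases i <;>
      simp [f, G, Matrix.mulVec, dotProduct, Fin.sum_univ_two] <;> ring
  have key : ∀ n : ℕ, 1 ≤ n → f^[n] (fun _ => 1) = ![s n, 1] := by
    intro n hn
    induction n with
    | zero => omega
    | succ m ih =>
      rcases Nat.eq_or_lt_of_le hn with h | h
      · have : m = 0 := by omega
        subst this
        have h1 : (fun _ : Fin 2 => 1) = ![(1 : ℕ), 1] := by
          funext i; fin_cases i <;> rfl
        simp [Function.iterate_one, h1, hstep, hs1]
      · have hm : 1 ≤ m := by omega
        rw [Function.iterate_succ_apply', ih hm, hstep,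
          hs (m + 1) (by omega)]
        simp
  intro n hn
  refine ⟨key n hn, ?_⟩
  rw [key n hn]
  simp
end
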